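/- The Shapley value satisfies symmetry (equal value condition): let D be a finite set, A : Set(D) → ℝ, and x, y ∈ D with x ≠ y. If for every subset S ⊆ D \ {x, y} we have A(S ∪ {x}) = A(S ∪ {y}), then the Shapley values of x and y coincide: (1/|D|!) Σ_π [A(P_π(x) ∪ {x}) − A(P_π(x))] = (1/|D|!) Σ_π [A(P_π(y) ∪ {y}) − A(P_π(y))]. -/

import Mathlib

open Finset

/-- The set of elements strictly preceding `x` in the permutation `σ`. -/
def preds {n : ℕ} (σ : Equiv.Perm (Fin n)) (x : Fin n) : Finset (Fin n) :=
  Finset.univ.filter fun y => σ y < σ x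

/-- Symmetry (equal value condition): interchangeable players get equal
Shapley values. -/
theorem shapley_symmetry (n : ℕ) (A : Finset (Fin n) → ℝ) (x y : Fin n)
    (hxy : x ≠ y)
    (h : ∀ S ⊆ (Finset.univ.erase x).erase y, A (insert x S) = A (insert y S)) :
    (1 / (Nat.factorial n) : ℝ) *
      ∑ σ : Equiv.Perm (Fin n), (A (insert x (preds σ x)) - A (preds σ x)) =
    (1 / (Nat.factorial n) : ℝ) *
      ∑ σ : Equiv.Perm (Fin n), (A (insert y (preds σ y)) - A (preds σ y)) := by
  congr 1
  apply Fintype.sum_bijective (· * Equiv.swap x y)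
    (Group.mulRight_bijective _)
  intro σ
  set S := preds σ x with hS
  have hxS : x ∉ S := by simp [hS, preds]
  have hmem : ∀ z, z ∈ preds (σ * Equiv.swap x y) y ↔ Equiv.swap x y z ∈ S := by
    intro z
    simp [preds, hS, Equiv.swap_apply_right]
  by_cases hyS : y ∈ S
  · -- preds (σ * swap) y = insert x (S.erase y)
    set S' := S.erase y with hS'
    have hxS' : x ∉ S' := fun hx => hxS (mem_of_mem_erase hx)
    have hyS' : y ∉ S' := notMem_erase _ _
    have hsub : S' ⊆ (Finset.univ.erase x).erase y := by
      intro z hz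
      simp only [mem_erase, mem_univ, and_true]
      exact ⟨ne_of_mem_erase hz, fun hzx => hxS' (hzx ▸ hz)⟩
    have hT : preds (σ * Equiv.swap x y) y = insert x S' := by
      ext z
      rw [hmem]
      rcases eq_or_ne z x with rfl | hzx
      · simp [Equiv.swap_apply_left, hyS]
      rcases eq_or_ne z y with rfl | hzy
      · simp [Equiv.swap_apply_right, hxS, hxy.symm, hyS']
      · rw [Equiv.swap_apply_of_ne_of_ne hzx hzy]
        simp [mem_insert, hzx, hS', mem_erase, hzy]
    have hSeq : S = insert y S' := (insert_erase hyS).symm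
    rw [hT, hSeq, Finset.insert_comm, h S' hsub]
  · -- preds (σ * swap) y = S
    have hT : preds (σ * Equiv.swap x y) y = S := by
      ext z
      rw [hmem]
      rcases eq_or_ne z x with rfl | hzx
      · simp [Equiv.swap_apply_left, hyS, hxS]
      rcases eq_or_ne z y with rfl | hzy
      · simp [Equiv.swap_apply_right, hxS, hyS]
      · rw [Equiv.swap_apply_of_ne_of_ne hzx hzy]
    have hsub : S ⊆ (Finset.univ.erase x).erase y := by
      intro z hz
      simp only [mem_erase, mem_univ, and_true]
      exact ⟨fun hzy => hyS (hzy ▸ hz), fun hzx => hxS (hzx ▸ hz)⟩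
    rw [hT, h S hsub]
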